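/- Suppose the follower's initial velocity satisfies v₀ ≥ 0 and the solution of the IDM system maintains the gap bound x_l(t) − x(t) − l ≥ s₀ for all t ∈ [0,T]. Then the follower's velocity remains nonnegative: ẋ(t) = v(t) ≥ 0 for all t ∈ [0,T]. (Indeed, at any time t⁰ with v(t⁰) = 0 one has v̇(t⁰) = a·(1 − (s₀/(x_l(t⁰) − x(t⁰) − l))²) ≥ 0, so the velocity cannot drop below zero.) -/

import Mathlib

open MeasureTheory Set

lemma gronwall_aux (v f : ℝ → ℝ) (K p q : ℝ) (hpq : p ≤ q) (hvp : v p = 0)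
    (hd : ∀ t ∈ Icc p q, HasDerivAt v (f t) t)
    (hf : ∀ t ∈ Icc p q, K * v t ≤ f t) : 0 ≤ v q := by
  have hgd : ∀ t ∈ Icc p q,
      HasDerivAt (fun s => v s * Real.exp (-(K * s)))
        (f t * Real.exp (-(K * t)) + -(v t * (Real.exp (-(K * t)) * K))) t := by
    intro t ht
    have h := (hd t ht).mul (((hasDerivAt_id t).const_mul (-K)).exp)
    simp at h
    exact h
  have hmono : MonotoneOn (fun s => v s * Real.exp (-(K * s))) (Icc p q) := by
    apply monotoneOn_of_deriv_nonneg (convex_Icc p q)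
    · intro t ht
      exact (hgd t ht).continuousAt.continuousWithinAt
    · intro t ht
      rw [interior_Icc] at ht
      exact ((hgd t (Ioo_subset_Icc_self ht)).differentiableAt).differentiableWithinAt
    · intro t ht
      rw [interior_Icc] at ht
      rw [(hgd t (Ioo_subset_Icc_self ht)).deriv]
      have h1 := hf t (Ioo_subset_Icc_self ht)
      have h2 := Real.exp_pos (-(K * t))
      nlinarith
  have := hmono (left_mem_Icc.2 hpq) (right_mem_Icc.2 hpq) hpq
  simp only [hvp, zero_mul] at this
  have h2 := Real.exp_pos (-(K * q))
  nlinarith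


/-- The IDM acceleration function. -/
noncomputable def IDMAcc (a b vfree τ s₀ l δ : ℝ) (x v xl vl : ℝ) : ℝ :=
  a * (1 - (|v| / vfree) ^ δ -
    ((2 * Real.sqrt (a * b) * (s₀ + v * τ) + v * (v - vl)) /
      (2 * Real.sqrt (a * b) * (xl - x - l))) ^ 2)

noncomputable def Kbd (a b vfree τ s₀ δ V M : ℝ) : ℝ :=
  a * ((V / vfree) ^ (δ - 1) / vfree +
    (2 * Real.sqrt (a * b) * τ + V + M) *
      (2 * (2 * Real.sqrt (a * b) * s₀) + (2 * Real.sqrt (a * b) * τ + V + M) * V) /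
        (2 * Real.sqrt (a * b) * s₀) ^ 2)

lemma acc_lower (a b vfree τ s₀ l δ : ℝ) (ha : 0 < a) (hb : 0 < b) (hvf : 0 < vfree)
    (hs₀ : 0 < s₀) (hτ : 0 ≤ τ) (hδ : 1 < δ)
    (x v xl vl V M : ℝ) (hG : s₀ ≤ xl - x - l) (hv : v ≤ 0) (hvl : 0 ≤ vl)
    (hvlM : vl ≤ M) (hV : |v| ≤ V) :
    Kbd a b vfree τ s₀ δ V M * v ≤ IDMAcc a b vfree τ s₀ l δ x v xl vl := by
  have hV0 : 0 ≤ V := le_trans (abs_nonneg v) hV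
  have hM0 : 0 ≤ M := le_trans hvl hvlM
  unfold IDMAcc Kbd
  set σ : ℝ := 2 * Real.sqrt (a * b) with hσdef
  have hσ : 0 < σ := by
    have : 0 < Real.sqrt (a * b) := Real.sqrt_pos.2 (by positivity)
    linarith
  set G : ℝ := xl - x - l with hGdef
  have hG0 : 0 < G := lt_of_lt_of_le hs₀ hG
  set β : ℝ := σ * τ + V + M with hβdef
  have hβ0 : 0 ≤ β := by positivity
  set P : ℝ := σ * s₀ with hPdef
  have hP : 0 < P := by positivity
  set num : ℝ := σ * (s₀ + v * τ) + v * (v - vl) with hnumdef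
  clear_value σ G β P num
  have habsv : |v| = -v := abs_of_nonpos hv
  have hav : 0 ≤ |v| := abs_nonneg v
  -- bound |num|
  have hnum : |num| ≤ P + β * |v| := by
    have h1 : |num| ≤ |σ * (s₀ + v * τ)| + |v * (v - vl)| := by
      rw [hnumdef]; exact abs_add_le _ _
    have h2 : |σ * (s₀ + v * τ)| ≤ σ * s₀ + σ * τ * |v| := by
      rw [abs_mul, abs_of_pos hσ]
      have : |s₀ + v * τ| ≤ s₀ + τ * |v| := by
        calc |s₀ + v * τ| ≤ |s₀| + |v * τ| := abs_add_le _ _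
        _ = s₀ + τ * |v| := by rw [abs_of_pos hs₀, abs_mul, abs_of_nonneg hτ]; ring
      nlinarith
    have h3 : |v * (v - vl)| ≤ |v| * (V + M) := by
      rw [abs_mul]
      have : |v - vl| ≤ V + M := by
        calc |v - vl| ≤ |v| + |vl| := abs_sub _ _
        _ ≤ V + M := by rw [abs_of_nonneg hvl]; linarith
      exact mul_le_mul_of_nonneg_left this hav
    nlinarith
  -- bound the square
  have hsq : (num / (σ * G)) ^ 2 ≤ (P + β * |v|) ^ 2 / P ^ 2 := by
    rw [div_pow]
    apply div_le_div₀ (by positivity)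
    · obtain ⟨h1', h2'⟩ := abs_le.1 hnum
      exact sq_le_sq' h1' h2'
    · exact pow_pos hP 2
    · have hPG : P ≤ σ * G := by
        rw [hPdef]; exact mul_le_mul_of_nonneg_left hG hσ.le
      nlinarith
  have hsq2 : (num / (σ * G)) ^ 2 ≤ 1 + β * (2 * P + β * V) / P ^ 2 * |v| := by
    refine hsq.trans ?_
    have key : (P + β * |v|) ^ 2 / P ^ 2 = 1 + (2 * P * β * |v| + β ^ 2 * |v| ^ 2) / P ^ 2 := by
      field_simp
      ring_nf
    have key2 : (2 * P * β * |v| + β ^ 2 * |v| ^ 2) / P ^ 2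
        ≤ β * (2 * P + β * V) * |v| / P ^ 2 := by
      rw [div_le_div_iff_of_pos_right (pow_pos hP 2)]
      linarith [mul_le_mul_of_nonneg_left hV (mul_nonneg (mul_nonneg hβ0 hβ0) hav)]
    rw [key]
    have : β * (2 * P + β * V) * |v| / P ^ 2 = β * (2 * P + β * V) / P ^ 2 * |v| := by ring
    linarith [key2, this ▸ key2]
  -- bound the rpow term
  have ht1 : (|v| / vfree) ^ δ ≤ (V / vfree) ^ (δ - 1) / vfree * |v| := by
    have h0 : (0:ℝ) ≤ |v| / vfree := by positivity
    have hrw : (|v| / vfree) ^ δ = (|v| / vfree) * (|v| / vfree) ^ (δ - 1) := by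
      have hd : δ = 1 + (δ - 1) := by ring
      rw [hd, Real.rpow_add' h0 (by intro h; linarith), Real.rpow_one]
      ring_nf
    rw [hrw]
    have hle : (|v| / vfree) ^ (δ - 1) ≤ (V / vfree) ^ (δ - 1) :=
      Real.rpow_le_rpow h0 (by gcongr) (by linarith)
    calc (|v| / vfree) * (|v| / vfree) ^ (δ - 1)
        ≤ (|v| / vfree) * (V / vfree) ^ (δ - 1) := mul_le_mul_of_nonneg_left hle h0
      _ = (V / vfree) ^ (δ - 1) / vfree * |v| := by ring
  -- combine
  have hfin : ((V / vfree) ^ (δ - 1) / vfree + β * (2 * P + β * V) / P ^ 2) * v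
      ≤ 1 - (|v| / vfree) ^ δ - (num / (σ * G)) ^ 2 := by
    have hx : ((V / vfree) ^ (δ - 1) / vfree + β * (2 * P + β * V) / P ^ 2) * v
        = -((V / vfree) ^ (δ - 1) / vfree * |v|) - β * (2 * P + β * V) / P ^ 2 * |v| := by
      rw [habsv]; ring
    rw [hx]
    linarith
  calc a * ((V / vfree) ^ (δ - 1) / vfree + β * (2 * P + β * V) / P ^ 2) * v
      = a * (((V / vfree) ^ (δ - 1) / vfree + β * (2 * P + β * V) / P ^ 2) * v) := by ring
    _ ≤ a * (1 - (|v| / vfree) ^ δ - (num / (σ * G)) ^ 2) :=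
        mul_le_mul_of_nonneg_left hfin ha.le

/-- A solution of the IDM system on the time horizon `[0, T]`. -/
structure IDMSolution (a b vfree τ s₀ l δ T : ℝ) (ulead : ℝ → ℝ)
    (x₀ xl₀ v₀ vl₀ : ℝ) (x xl v vl : ℝ → ℝ) : Prop where
  init_x : x 0 = x₀
  init_xl : xl 0 = xl₀
  init_v : v 0 = v₀
  init_vl : vl 0 = vl₀
  gap_pos : ∀ t ∈ Icc (0:ℝ) T, 0 < xl t - x t - l
  deriv_x : ∀ t ∈ Icc (0:ℝ) T, HasDerivAt x (v t) t
  deriv_xl : ∀ t ∈ Icc (0:ℝ) T, HasDerivAt xl (vl t) t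
  eq_vl : ∀ t ∈ Icc (0:ℝ) T, vl t = vl₀ + ∫ s in (0:ℝ)..t, ulead s
  deriv_v : ∀ t ∈ Icc (0:ℝ) T,
    HasDerivAt v (IDMAcc a b vfree τ s₀ l δ (x t) (v t) (xl t) (vl t)) t

/-- **Nonnegativity of the velocity under a safe gap.**
If `v₀ ≥ 0` and the gap satisfies `x_l(t) − x(t) − l ≥ s₀` for all
`t ∈ [0,T]`, then the follower's velocity remains nonnegative on `[0,T]`. -/
theorem idm_velocity_nonneg_of_gap_ge_s0
    (T a b vfree s₀ l δ τ : ℝ) (ulead : ℝ → ℝ) (x₀ xl₀ v₀ vl₀ : ℝ)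
    (x xl v vl : ℝ → ℝ)
    (hT : 0 < T) (ha : 0 < a) (hb : 0 < b) (hvf : 0 < vfree)
    (hs₀ : 0 < s₀) (hl : 0 < l) (hτ : τ ∈ Ioo 0 T) (hδ : 1 < δ)
    (hinit : x₀ < xl₀ - l) (hv₀ : 0 ≤ v₀) (hvl₀ : 0 ≤ vl₀)
    (hu' : ∀ t ∈ Icc (0:ℝ) T, 0 ≤ vl₀ + ∫ s in (0:ℝ)..t, ulead s)
    (hsol : IDMSolution a b vfree τ s₀ l δ T ulead x₀ xl₀ v₀ vl₀ x xl v vl)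
    (hgap : ∀ t ∈ Icc (0:ℝ) T, s₀ ≤ xl t - x t - l) :
    ∀ t ∈ Icc (0:ℝ) T, 0 ≤ v t := by
  by_contra hcon
  push_neg at hcon
  obtain ⟨t₁, ht₁, hvt₁⟩ := hcon
  have hvc : ∀ t ∈ Icc (0:ℝ) T, ContinuousAt v t := fun t ht =>
    (hsol.deriv_v t ht).continuousAt
  have hvcon : ContinuousOn v (Icc 0 T) := fun t ht => (hvc t ht).continuousWithinAt
  obtain ⟨C, hC⟩ := isCompact_Icc.exists_bound_of_continuousOn hvcon
  set V : ℝ := max C 0 with hVdef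
  have hVb : ∀ t ∈ Icc (0:ℝ) T, |v t| ≤ V := fun t ht => by
    have := hC t ht
    rw [Real.norm_eq_abs] at this
    exact this.trans (le_max_left _ _)
  have hvlnn : ∀ t ∈ Icc (0:ℝ) T, 0 ≤ vl t := fun t ht => by
    rw [hsol.eq_vl t ht]; exact hu' t ht
  -- the last zero of v before t₁
  set Z : Set ℝ := Icc 0 t₁ ∩ v ⁻¹' Ici 0 with hZdef
  have hZclosed : IsClosed Z :=
    ContinuousOn.preimage_isClosed_of_isClosed
      (hvcon.mono (Icc_subset_Icc le_rfl ht₁.2)) isClosed_Icc isClosed_Ici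
  have hZcomp : IsCompact Z :=
    IsCompact.of_isClosed_subset isCompact_Icc hZclosed inter_subset_left
  have hZne : Z.Nonempty := ⟨0, ⟨left_mem_Icc.2 ht₁.1, by
    simp only [mem_preimage, mem_Ici, hsol.init_v]; exact hv₀⟩⟩
  set t₀ : ℝ := sSup Z with ht₀def
  have ht₀Z : t₀ ∈ Z := hZcomp.sSup_mem hZne
  have ht₀mem : t₀ ∈ Icc 0 t₁ := ht₀Z.1
  have hvt₀nn : (0:ℝ) ≤ v t₀ := ht₀Z.2
  have ht₀T : t₀ ∈ Icc (0:ℝ) T := ⟨ht₀mem.1, ht₀mem.2.trans ht₁.2⟩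
  have ht₀lt : t₀ < t₁ := lt_of_le_of_ne ht₀mem.2 (by
    intro h; rw [h] at hvt₀nn; linarith)
  have hneg : ∀ s ∈ Ioc t₀ t₁, v s < 0 := by
    intro s hs
    by_contra h
    push_neg at h
    have hsZ : s ∈ Z := ⟨⟨ht₀mem.1.trans hs.1.le, hs.2⟩, h⟩
    have : s ≤ t₀ := le_csSup hZcomp.bddAbove hsZ
    linarith [hs.1]
  have hvt₀0 : v t₀ = 0 := by
    haveI hnb : (nhdsWithin t₀ (Ioc t₀ t₁)).NeBot :=
      mem_closure_iff_nhdsWithin_neBot.mp (by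
        rw [closure_Ioc ht₀lt.ne]; exact left_mem_Icc.2 ht₀lt.le)
    have htends : Filter.Tendsto v (nhdsWithin t₀ (Ioc t₀ t₁)) (nhds (v t₀)) :=
      ((hvc t₀ ht₀T).tendsto).mono_left nhdsWithin_le_nhds
    have hle : v t₀ ≤ 0 :=
      le_of_tendsto htends (eventually_mem_nhdsWithin.mono fun s hs => (hneg s hs).le)
    linarith
  have hτ0 : (0:ℝ) ≤ τ := hτ.1.le
  -- main contradiction machine
  have main : ∀ s ∈ Ioc t₀ t₁, ∀ M : ℝ, (∀ t ∈ Icc t₀ s, vl t ≤ M) → False := by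
    intro s hs M hM
    have hsub : ∀ t ∈ Icc t₀ s, t ∈ Icc (0:ℝ) T := fun t ht =>
      ⟨ht₀mem.1.trans ht.1, ht.2.trans (hs.2.trans ht₁.2)⟩
    have hvle : ∀ t ∈ Icc t₀ s, v t ≤ 0 := by
      intro t ht
      rcases eq_or_lt_of_le ht.1 with h | h
      · rw [← h, hvt₀0]
      · exact (hneg t ⟨h, ht.2.trans hs.2⟩).le
    have h0 : 0 ≤ v s := by
      apply gronwall_aux v
        (fun t => IDMAcc a b vfree τ s₀ l δ (x t) (v t) (xl t) (vl t))
        (Kbd a b vfree τ s₀ δ V M) t₀ s hs.1.le hvt₀0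
        (fun t ht => hsol.deriv_v t (hsub t ht))
      intro t ht
      exact acc_lower a b vfree τ s₀ l δ ha hb hvf hs₀ hτ0 hδ
        (x t) (v t) (xl t) (vl t) V M (hgap t (hsub t ht)) (hvle t ht)
        (hvlnn t (hsub t ht)) (hM t ht) (hVb t (hsub t ht))
    exact absurd (hneg s hs) (not_lt.2 h0)
  by_cases hcase : ∃ s ∈ Ioc t₀ t₁, IntervalIntegrable ulead MeasureTheory.volume 0 s
  · obtain ⟨s, hs, hint⟩ := hcase
    have h0s : (0:ℝ) ≤ s := ht₀mem.1.trans hs.1.le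
    apply main s hs (vl₀ + ∫ u in (0:ℝ)..s, |ulead u|)
    intro t ht
    have ht0T : t ∈ Icc (0:ℝ) T := ⟨ht₀mem.1.trans ht.1, ht.2.trans (hs.2.trans ht₁.2)⟩
    have h0t : (0:ℝ) ≤ t := ht₀mem.1.trans ht.1
    have hint_t : IntervalIntegrable ulead MeasureTheory.volume 0 t :=
      hint.mono_set (by
        rw [uIcc_of_le h0t, uIcc_of_le h0s]
        exact Icc_subset_Icc le_rfl ht.2)
    rw [hsol.eq_vl t ht0T]
    have h1 : (∫ u in (0:ℝ)..t, ulead u) ≤ ∫ u in (0:ℝ)..t, |ulead u| :=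
      intervalIntegral.integral_mono_on h0t hint_t hint_t.abs
        (fun u _ => le_abs_self _)
    have h2 : (∫ u in (0:ℝ)..t, |ulead u|) ≤ ∫ u in (0:ℝ)..s, |ulead u| :=
      intervalIntegral.integral_mono_interval le_rfl h0t ht.2
        (Filter.Eventually.of_forall fun u => abs_nonneg _) hint.abs
    linarith
  · push_neg at hcase
    apply main t₁ ⟨ht₀lt, le_rfl⟩ (max vl₀ (vl t₀))
    intro t ht
    rcases eq_or_lt_of_le ht.1 with h | h
    · rw [← h]; exact le_max_right _ _
    · have ht0T : t ∈ Icc (0:ℝ) T := ⟨ht₀mem.1.trans ht.1, ht.2.trans ht₁.2⟩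
      rw [hsol.eq_vl t ht0T, intervalIntegral.integral_undef (hcase t ⟨h, ht.2⟩), add_zero]
      exact le_max_left _ _
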